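/- Let ℓ: [0,1] × {0,1} → [−1,1] be any loss with Borel measurable sections ℓ(·,y) and let k_ℓ be a post-processing for ℓ. If a randomized predictor ((Ω,π), p) is randomized (G,∅,ε)-step calibrated, then for every group g ∈ G: |E_{ω~π,(x,y)~D}[(y − p(ω,x))·Δℓ(k_ℓ(p(ω,x))) | g(x)=1]| ≤ 10ε·√(1/P_g). -/

import Mathlib

open MeasureTheory ProbabilityTheory Set

noncomputable section

/-- Real value of a Boolean label. -/
def lab (y : Bool) : ℝ := if y then 1 else 0

/-- Conditional expectation of `f` under `D`, given that the group membership
function `g` evaluates to `true` on the context. -/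
def condE {X : Type*} [MeasurableSpace X] (D : Measure (X × Bool)) (g : X → Bool)
    (f : X × Bool → ℝ) : ℝ :=
  ∫ z, f z ∂(D[|{z : X × Bool | g z.1 = true}])

/-- Probability of group `g` under `D`. -/
def Pg {X : Type*} [MeasurableSpace X] (D : Measure (X × Bool)) (g : X → Bool) : ℝ :=
  (D {z : X × Bool | g z.1 = true}).toReal

/-- The set of all partition sums `∑ |f(z_{j+1}) - f(z_j)|` over finite partitions
`0 = z_0 < z_1 < ⋯ < z_m = 1` of `[0,1]`.  `V(f) ≤ C` iff every element is `≤ C`. -/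
def partitionSums (f : ℝ → ℝ) : Set ℝ :=
  {S | ∃ (m : ℕ) (z : ℕ → ℝ), z 0 = 0 ∧ z m = 1 ∧ (∀ i < m, z i < z (i + 1)) ∧
      S = ∑ i ∈ Finset.range m, |f (z (i + 1)) - f (z i)|}

/-- Joint conditional expectation for a randomized predictor: `F` is averaged over
`ω ~ π` drawn independently of `(x, y) ~ D`, conditioned on `g x = true`. -/
def condER {Ω X : Type*} [MeasurableSpace Ω] [MeasurableSpace X]
    (π : Measure Ω) (D : Measure (X × Bool)) (g : X → Bool)
    (F : Ω × (X × Bool) → ℝ) : ℝ :=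
  ∫ u, F u ∂((π.prod D)[|{u : Ω × (X × Bool) | g u.2.1 = true}])

/-- Level sets of a function antitone on `[0,1]` are intervals (within `[0,1]`). -/
lemma antitone_level_structure (φ : ℝ → ℝ)
    (hanti : ∀ q1 ∈ Icc (0:ℝ) 1, ∀ q2 ∈ Icc (0:ℝ) 1, q1 ≤ q2 → φ q2 ≤ φ q1) (t : ℝ) :
    (∀ q ∈ Icc (0:ℝ) 1, ¬ t ≤ φ q) ∨
      ∃ a ∈ Icc (0:ℝ) 1, (∀ q ∈ Icc (0:ℝ) 1, (t ≤ φ q ↔ q ≤ a)) ∨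
        (∀ q ∈ Icc (0:ℝ) 1, (t ≤ φ q ↔ q < a)) := by
  by_cases hne : ∃ q ∈ Icc (0:ℝ) 1, t ≤ φ q
  · right
    set S : Set ℝ := {q | q ∈ Icc (0:ℝ) 1 ∧ t ≤ φ q} with hS
    have hSne : S.Nonempty := by obtain ⟨q, hq, ht⟩ := hne; exact ⟨q, hq, ht⟩
    have hbdd : BddAbove S := ⟨1, fun q hq => hq.1.2⟩
    set a : ℝ := sSup S with ha
    obtain ⟨q0, hq0⟩ := hSne
    have ha1 : a ≤ 1 := csSup_le ⟨q0, hq0⟩ fun q hq => hq.1.2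
    have ha0 : 0 ≤ a := le_trans hq0.1.1 (le_csSup hbdd hq0)
    refine ⟨a, ⟨ha0, ha1⟩, ?_⟩
    by_cases hmem : t ≤ φ a
    · left
      intro q hq
      constructor
      · intro h; exact le_csSup hbdd ⟨hq, h⟩
      · intro h; exact le_trans hmem (hanti q hq a ⟨ha0, ha1⟩ h)
    · right
      intro q hq
      constructor
      · intro h
        have hle : q ≤ a := le_csSup hbdd ⟨hq, h⟩
        rcases lt_or_eq_of_le hle with h' | h'
        · exact h'
        · exact absurd (h' ▸ h) hmem
      · intro h
        obtain ⟨q', hq', hlt⟩ := exists_lt_of_lt_csSup ⟨q0, hq0⟩ h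
        exact le_trans hq'.2 (hanti q hq q' hq'.1 hlt.le)
  · left
    push_neg at hne
    exact fun q hq h => absurd h (not_le.2 (hne q hq))

/-- Riemann-sum approximation of a number `r ∈ [0,4]` by level indicators. -/
lemma approx_sum (δ : ℝ) (hδ : 0 < δ) (N : ℕ) (hN : (N:ℝ) * δ = 4) (r : ℝ)
    (h0 : 0 ≤ r) (h4 : r ≤ 4) :
    |r - ∑ i ∈ Finset.range N, (if ((i:ℝ)+1) * δ ≤ r then δ else 0)| ≤ δ := by
  set m : ℕ := ⌊r / δ⌋₊ with hm
  have hrδ : r / δ ≤ (N:ℝ) := by rw [div_le_iff₀ hδ]; linarith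
  have hmN : m ≤ N := by
    have := Nat.floor_mono hrδ
    simpa using this
  have hind : ∀ i : ℕ, (((i:ℝ)+1) * δ ≤ r) ↔ (i + 1 ≤ m) := by
    intro i
    rw [hm, Nat.le_floor_iff (div_nonneg h0 hδ.le), le_div_iff₀ hδ]
    push_cast
    constructor <;> intro h <;> linarith
  have hfil : (Finset.range N).filter (fun i => i + 1 ≤ m) = Finset.range m := by
    ext i
    simp only [Finset.mem_filter, Finset.mem_range]
    omega
  have hsum : ∑ i ∈ Finset.range N, (if ((i:ℝ)+1) * δ ≤ r then δ else 0) = (m:ℝ) * δ := by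
    have hcong : ∀ i ∈ Finset.range N,
        (if ((i:ℝ)+1) * δ ≤ r then δ else 0) = (if i + 1 ≤ m then δ else 0) := by
      intro i _
      by_cases h : ((i:ℝ)+1) * δ ≤ r
      · rw [if_pos h, if_pos ((hind i).1 h)]
      · rw [if_neg h, if_neg (fun hc => h ((hind i).2 hc))]
    rw [Finset.sum_congr rfl hcong, ← Finset.sum_filter, hfil, Finset.sum_const,
      Finset.card_range, nsmul_eq_mul]
  have h1 : (m:ℝ) * δ ≤ r := by
    have := Nat.floor_le (div_nonneg h0 hδ.le)
    rw [← hm] at this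
    calc (m:ℝ) * δ ≤ (r / δ) * δ := by nlinarith
    _ = r := by field_simp
  have h2 : r < δ * ((m:ℝ) + 1) := by
    have := Nat.lt_floor_add_one (r / δ)
    rw [← hm] at this
    calc r = (r / δ) * δ := by field_simp
    _ < ((m:ℝ) + 1) * δ := by nlinarith
    _ = δ * ((m:ℝ) + 1) := by ring
  rw [hsum, abs_le]
  constructor <;> nlinarith

/-- **randomized Decision OI.** If a randomized predictor is randomized
`(G, ∅, ε)`-step calibrated, then for every group `g ∈ G`,
`|E[(y - p(ω,x))·Δℓ(k_ℓ(p(ω,x))) | g(x)=1]| ≤ 10ε·√(1/P_g)`. -/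
theorem stmt11 {Ω X : Type*} [MeasurableSpace Ω] [MeasurableSpace X]
    (π : Measure Ω) [IsProbabilityMeasure π]
    (D : Measure (X × Bool)) [IsProbabilityMeasure D]
    (ε : ℝ) (hε : 0 < ε)
    -- an arbitrary loss with Borel measurable sections, bounded in [-1,1]
    (ℓ : ℝ → Bool → ℝ)
    (hLmeas : ∀ y : Bool, Measurable (fun q => ℓ q y))
    (hLbdd : ∀ q ∈ Icc (0:ℝ) 1, ∀ y : Bool, ℓ q y ∈ Icc (-1:ℝ) 1)
    -- a post-processing for ℓ
    (k : ℝ → ℝ) (hkmeas : Measurable k)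
    (hkrange : ∀ q ∈ Icc (0:ℝ) 1, k q ∈ Icc (0:ℝ) 1)
    (hkopt : ∀ q ∈ Icc (0:ℝ) 1, ∀ yhat ∈ Icc (0:ℝ) 1,
      q * ℓ (k q) true + (1 - q) * ℓ (k q) false ≤ q * ℓ yhat true + (1 - q) * ℓ yhat false)
    (G : Set (X → Bool)) (hGmeas : ∀ g ∈ G, Measurable g)
    (hGpos : ∀ g ∈ G, 0 < Pg D g)
    (p : Ω × X → ℝ) (hpmeas : Measurable p) (hprange : ∀ u, p u ∈ Icc (0:ℝ) 1)
    -- randomized (G, ∅, ε)-step calibration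
    (hcal : ∀ v ∈ Icc (0:ℝ) 1, ∀ g ∈ G,
      |condER π D g (fun u => (lab u.2.2 - p (u.1, u.2.1)) *
        (if p (u.1, u.2.1) ≤ v then 1 else 0))| ≤ ε * Real.sqrt (1 / Pg D g)) :
    ∀ g ∈ G,
      |condER π D g (fun u => (lab u.2.2 - p (u.1, u.2.1)) *
          (ℓ (k (p (u.1, u.2.1))) true - ℓ (k (p (u.1, u.2.1))) false))| ≤
        10 * ε * Real.sqrt (1 / Pg D g) := by
  intro g hg
  have hPg : 0 < Pg D g := hGpos g hg
  set B := ε * Real.sqrt (1 / Pg D g) with hBdef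
  -- basic facts about B
  have hPg1 : Pg D g ≤ 1 := by
    unfold Pg
    calc (D {z : X × Bool | g z.1 = true}).toReal ≤ (1 : ENNReal).toReal :=
      ENNReal.toReal_mono ENNReal.one_ne_top prob_le_one
    _ = 1 := by simp
  have hsqrt1 : (1:ℝ) ≤ Real.sqrt (1 / Pg D g) := by
    have h1 : (1:ℝ) ≤ 1 / Pg D g := by rw [le_div_iff₀ hPg]; linarith
    nlinarith [Real.sq_sqrt (by positivity : (0:ℝ) ≤ 1 / Pg D g),
      Real.sqrt_nonneg (1 / Pg D g)]
  have hεB : ε ≤ B := le_mul_of_one_le_right hε.le hsqrt1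
  have hB0 : 0 ≤ B := le_trans hε.le hεB
  -- the conditional measure
  set S : Set (Ω × (X × Bool)) := {u | g u.2.1 = true} with hSdef
  set μ : Measure (Ω × (X × Bool)) := (π.prod D)[|S] with hμdef
  have hSm : MeasurableSet S :=
    ((hGmeas g hg).comp (measurable_fst.comp measurable_snd)) (measurableSet_singleton true)
  have hSval : (π.prod D) S = D {z : X × Bool | g z.1 = true} := by
    have : S = (univ : Set Ω) ×ˢ {z : X × Bool | g z.1 = true} := by
      ext u; simp [hSdef, Set.mem_prod]
    rw [this, Measure.prod_prod, measure_univ, one_mul]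
  have hSpos : (π.prod D) S ≠ 0 := by
    rw [hSval]
    intro h
    rw [Pg, h] at hPg
    simp at hPg
  haveI hμprob : IsProbabilityMeasure μ := cond_isProbabilityMeasure hSpos
  -- measurability facts
  have hPm : Measurable (fun u : Ω × (X × Bool) => p (u.1, u.2.1)) :=
    hpmeas.comp (measurable_fst.prodMk (measurable_fst.comp measurable_snd))
  have hYm : Measurable (fun u : Ω × (X × Bool) => lab u.2.2) :=
    (Measurable.of_discrete (f := lab)).comp (measurable_snd.comp measurable_snd)
  have hf0m : Measurable (fun u : Ω × (X × Bool) => lab u.2.2 - p (u.1, u.2.1)) :=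
    hYm.sub hPm
  have hφm : Measurable (fun q => ℓ (k q) true - ℓ (k q) false) :=
    ((hLmeas true).comp hkmeas).sub ((hLmeas false).comp hkmeas)
  -- boundedness of the basic residual
  have hf0b : ∀ u : Ω × (X × Bool), |lab u.2.2 - p (u.1, u.2.1)| ≤ 1 := by
    intro u
    have h := hprange (u.1, u.2.1)
    rw [abs_le]
    cases u.2.2 <;> simp [lab] <;> constructor <;> linarith [h.1, h.2]
  -- integrability helper
  have hInt : ∀ (f : Ω × (X × Bool) → ℝ) (C : ℝ), Measurable f → (∀ u, |f u| ≤ C) →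
      Integrable f μ := by
    intro f C hf hC
    exact (integrable_const C).mono' hf.aestronglyMeasurable
      (Filter.Eventually.of_forall (by simpa [Real.norm_eq_abs] using hC))
  -- calibration restated over μ
  have hA : ∀ v ∈ Icc (0:ℝ) 1,
      |∫ u, (lab u.2.2 - p (u.1, u.2.1)) * (if p (u.1, u.2.1) ≤ v then 1 else 0) ∂μ| ≤ B :=
    fun v hv => hcal v hv g hg
  -- calibration for the full residual (v = 1)
  have hA1 : |∫ u, (lab u.2.2 - p (u.1, u.2.1)) ∂μ| ≤ B := by
    have h := hA 1 ⟨zero_le_one, le_refl 1⟩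
    have heq : (fun u : Ω × (X × Bool) =>
        (lab u.2.2 - p (u.1, u.2.1)) * (if p (u.1, u.2.1) ≤ (1:ℝ) then 1 else 0)) =
        fun u => lab u.2.2 - p (u.1, u.2.1) := by
      funext u
      rw [if_pos (hprange (u.1, u.2.1)).2, mul_one]
    rwa [heq] at h
  -- calibration for strict thresholds, via dominated convergence
  have hA' : ∀ a ∈ Icc (0:ℝ) 1,
      |∫ u, (lab u.2.2 - p (u.1, u.2.1)) * (if p (u.1, u.2.1) < a then 1 else 0) ∂μ| ≤ B := by
    intro a ha
    rcases eq_or_lt_of_le ha.1 with h0 | h0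
    · have heq : (fun u : Ω × (X × Bool) =>
          (lab u.2.2 - p (u.1, u.2.1)) * (if p (u.1, u.2.1) < a then 1 else 0)) =
          fun _ => (0:ℝ) := by
        funext u
        rw [if_neg (not_lt.2 (h0 ▸ (hprange (u.1, u.2.1)).1)), mul_zero]
      rw [heq]
      simpa using hB0
    · set v : ℕ → ℝ := fun n => a - a / (n + 2) with hv
      have hvlt : ∀ n, v n < a := by
        intro n
        have : 0 < a / (n + 2) := by positivity
        simp only [hv]; linarith
      have hvmem : ∀ n, v n ∈ Icc (0:ℝ) 1 := by
        intro n
        constructor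
        · have h2 : a / (n + 2) ≤ a / 2 := by
            apply div_le_div_of_nonneg_left h0.le (by norm_num)
            have : (0:ℝ) ≤ (n:ℝ) := Nat.cast_nonneg n
            linarith
          simp only [hv]; linarith
        · exact le_trans (hvlt n).le ha.2
      have hvt : Filter.Tendsto v Filter.atTop (nhds a) := by
        have h1 : Filter.Tendsto (fun n : ℕ => a / ((n:ℝ) + 2)) Filter.atTop (nhds 0) := by
          apply Filter.Tendsto.div_atTop tendsto_const_nhds
          exact Filter.tendsto_atTop_add_const_right _ 2 tendsto_natCast_atTop_atTop
        have := Filter.Tendsto.sub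
          (tendsto_const_nhds : Filter.Tendsto (fun _ : ℕ => a) Filter.atTop (nhds a)) h1
        simpa using this
      set F : ℕ → Ω × (X × Bool) → ℝ := fun n u =>
        (lab u.2.2 - p (u.1, u.2.1)) * (if p (u.1, u.2.1) ≤ v n then 1 else 0) with hF
      set f : Ω × (X × Bool) → ℝ := fun u =>
        (lab u.2.2 - p (u.1, u.2.1)) * (if p (u.1, u.2.1) < a then 1 else 0) with hf
      have hFm : ∀ n, AEStronglyMeasurable (F n) μ := by
        intro n
        exact (hf0m.mul (Measurable.ite (measurableSet_le hPm measurable_const)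
          measurable_const measurable_const)).aestronglyMeasurable
      have hFb : ∀ n, ∀ᵐ u ∂μ, ‖F n u‖ ≤ (1:ℝ) := by
        intro n
        apply Filter.Eventually.of_forall
        intro u
        simp only [Real.norm_eq_abs, hF]
        rw [abs_mul]
        have h1 := hf0b u
        have h2 : |(if p (u.1, u.2.1) ≤ v n then (1:ℝ) else 0)| ≤ 1 := by
          split <;> simp
        calc |lab u.2.2 - p (u.1, u.2.1)| * |(if p (u.1, u.2.1) ≤ v n then (1:ℝ) else 0)| ≤
            1 * 1 := mul_le_mul h1 h2 (abs_nonneg _) zero_le_one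
        _ = 1 := by ring
      have hlim : ∀ᵐ u ∂μ, Filter.Tendsto (fun n => F n u) Filter.atTop (nhds (f u)) := by
        apply Filter.Eventually.of_forall
        intro u
        rcases lt_or_ge (p (u.1, u.2.1)) a with hlt | hge
        · have hev : ∀ᶠ n in Filter.atTop, F n u = f u := by
            have := hvt.eventually (eventually_gt_nhds hlt)
            filter_upwards [this] with n hn
            simp only [hF, hf]
            rw [if_pos hn.le, if_pos hlt]
          exact Filter.Tendsto.congr' (hev.mono fun n h => h.symm) tendsto_const_nhds
        · have hev : ∀ n, F n u = f u := by
            intro n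
            simp only [hF, hf]
            rw [if_neg (not_le.2 (lt_of_lt_of_le (hvlt n) hge)), if_neg (not_lt.2 hge)]
          exact (Filter.tendsto_congr hev).2 tendsto_const_nhds
      have htend := tendsto_integral_of_dominated_convergence (fun _ => (1:ℝ)) hFm
        (integrable_const 1) hFb hlim
      have habs := htend.abs
      apply le_of_tendsto habs
      exact Filter.Eventually.of_forall fun n => hA (v n) (hvmem n)
  -- the discrete derivative after post-processing
  set φ : ℝ → ℝ := fun q => ℓ (k q) true - ℓ (k q) false with hφ
  have hφanti : ∀ q1 ∈ Icc (0:ℝ) 1, ∀ q2 ∈ Icc (0:ℝ) 1, q1 ≤ q2 → φ q2 ≤ φ q1 := by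
    intro q1 h1 q2 h2 h12
    rcases eq_or_lt_of_le h12 with rfl | hlt
    · exact le_refl _
    · have e1 := hkopt q1 h1 (k q2) (hkrange q2 h2)
      have e2 := hkopt q2 h2 (k q1) (hkrange q1 h1)
      simp only [hφ]
      nlinarith [e1, e2]
  have hφbdd : ∀ q ∈ Icc (0:ℝ) 1, |φ q| ≤ 2 := by
    intro q hq
    have h1 := hLbdd (k q) (hkrange q hq) true
    have h2 := hLbdd (k q) (hkrange q hq) false
    rw [hφ, abs_le]
    constructor <;> [skip; skip] <;> simp only <;> linarith [h1.1, h1.2, h2.1, h2.2]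
  -- threshold bound
  have hD : ∀ t : ℝ,
      |∫ u, (lab u.2.2 - p (u.1, u.2.1)) *
        (if t ≤ φ (p (u.1, u.2.1)) then 1 else 0) ∂μ| ≤ B := by
    intro t
    rcases antitone_level_structure φ hφanti t with hnone | ⟨a, ha, hcase⟩
    · have heq : (fun u : Ω × (X × Bool) =>
          (lab u.2.2 - p (u.1, u.2.1)) * (if t ≤ φ (p (u.1, u.2.1)) then 1 else 0)) =
          fun _ => (0:ℝ) := by
        funext u
        rw [if_neg (hnone _ (hprange (u.1, u.2.1))), mul_zero]
      rw [heq]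
      simpa using hB0
    · rcases hcase with hle | hlt
      · have heq : (fun u : Ω × (X × Bool) =>
            (lab u.2.2 - p (u.1, u.2.1)) * (if t ≤ φ (p (u.1, u.2.1)) then 1 else 0)) =
            fun u => (lab u.2.2 - p (u.1, u.2.1)) * (if p (u.1, u.2.1) ≤ a then 1 else 0) := by
          funext u
          rw [show (if t ≤ φ (p (u.1, u.2.1)) then (1:ℝ) else 0) =
            (if p (u.1, u.2.1) ≤ a then 1 else 0) by
              simp only [hle _ (hprange (u.1, u.2.1))]]
        rw [heq]
        exact hA a ha
      · have heq : (fun u : Ω × (X × Bool) =>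
            (lab u.2.2 - p (u.1, u.2.1)) * (if t ≤ φ (p (u.1, u.2.1)) then 1 else 0)) =
            fun u => (lab u.2.2 - p (u.1, u.2.1)) * (if p (u.1, u.2.1) < a then 1 else 0) := by
          funext u
          rw [show (if t ≤ φ (p (u.1, u.2.1)) then (1:ℝ) else 0) =
            (if p (u.1, u.2.1) < a then 1 else 0) by
              simp only [hlt _ (hprange (u.1, u.2.1))]]
        rw [heq]
        exact hA' a ha
  -- discretization
  set N : ℕ := ⌈(4:ℝ)/ε⌉₊ with hN
  have hNpos : 0 < N := Nat.ceil_pos.2 (by positivity)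
  set δ : ℝ := 4 / N with hδ
  have hδpos : 0 < δ := by positivity
  have hNδ : (N:ℝ) * δ = 4 := by
    rw [hδ]
    field_simp
  have hδε : δ ≤ ε := by
    have h1 : (4:ℝ)/ε ≤ N := Nat.le_ceil _
    rw [hδ, div_le_iff₀ (by positivity)]
    rw [div_le_iff₀ hε] at h1
    linarith [mul_comm ε (N:ℝ)]
  set c : ℝ := φ 1 with hc
  -- pointwise approximation
  have happrox : ∀ q ∈ Icc (0:ℝ) 1,
      |φ q - c - ∑ i ∈ Finset.range N, δ * (if c + ((i:ℝ)+1) * δ ≤ φ q then 1 else 0)| ≤ δ := by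
    intro q hq
    have hr0 : 0 ≤ φ q - c := sub_nonneg.2 (hφanti q hq 1 ⟨zero_le_one, le_refl 1⟩ hq.2)
    have hb1 := hφbdd q hq
    have hb2 := hφbdd 1 ⟨zero_le_one, le_refl 1⟩
    rw [abs_le] at hb1 hb2
    have hr4 : φ q - c ≤ 4 := by rw [hc]; linarith [hb1.1, hb1.2, hb2.1, hb2.2]
    have h := approx_sum δ hδpos N hNδ (φ q - c) hr0 hr4
    have hcong : ∀ i ∈ Finset.range N,
        δ * (if c + ((i:ℝ)+1) * δ ≤ φ q then (1:ℝ) else 0) =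
        (if ((i:ℝ)+1) * δ ≤ φ q - c then δ else 0) := by
      intro i _
      have : (c + ((i:ℝ)+1) * δ ≤ φ q) ↔ (((i:ℝ)+1) * δ ≤ φ q - c) := by
        constructor <;> intro <;> linarith
      rcases em (((i:ℝ)+1) * δ ≤ φ q - c) with h' | h'
      · rw [if_pos (this.2 h'), if_pos h', mul_one]
      · rw [if_neg (fun hc' => h' (this.1 hc')), if_neg h', mul_zero]
    rw [Finset.sum_congr rfl hcong]
    exact h
  -- main decomposition
  set f0 : Ω × (X × Bool) → ℝ := fun u => lab u.2.2 - p (u.1, u.2.1) with hf0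
  set Ind : ℕ → Ω × (X × Bool) → ℝ :=
    fun i u => if c + ((i:ℝ)+1) * δ ≤ φ (p (u.1, u.2.1)) then 1 else 0 with hInd
  have hIndm : ∀ i, Measurable (Ind i) := by
    intro i
    exact Measurable.ite (measurableSet_le measurable_const (hφm.comp hPm))
      measurable_const measurable_const
  have hIndb : ∀ i u, |Ind i u| ≤ 1 := by
    intro i u
    simp only [hInd]
    split <;> simp
  -- the error function
  set ferr : Ω × (X × Bool) → ℝ := fun u =>
    f0 u * (φ (p (u.1, u.2.1)) - c - ∑ i ∈ Finset.range N, δ * Ind i u) with hferr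
  have hferrb : ∀ u, |ferr u| ≤ δ := by
    intro u
    rw [hferr, abs_mul]
    have h1 := hf0b u
    have h2 := happrox (p (u.1, u.2.1)) (hprange (u.1, u.2.1))
    calc |f0 u| * |φ (p (u.1, u.2.1)) - c - ∑ i ∈ Finset.range N, δ * Ind i u| ≤
        1 * δ := mul_le_mul h1 h2 (abs_nonneg _) zero_le_one
    _ = δ := by ring
  have hferrm : Measurable ferr := by
    apply hf0m.mul
    apply Measurable.sub
    apply Measurable.sub (hφm.comp hPm) measurable_const
    exact Finset.measurable_sum _ fun i _ => (hIndm i).const_mul δ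
  -- integrability
  have hf0int : Integrable f0 μ := hInt f0 1 hf0m hf0b
  have hfiint : ∀ i, Integrable (fun u => δ * (f0 u * Ind i u)) μ := by
    intro i
    apply hInt _ (δ * 1) ((hf0m.mul (hIndm i)).const_mul δ)
    intro u
    rw [abs_mul, Pi.mul_apply, abs_mul, abs_of_pos hδpos]
    apply mul_le_mul_of_nonneg_left _ hδpos.le
    calc |f0 u| * |Ind i u| ≤ 1 * 1 := mul_le_mul (hf0b u) (hIndb i u) (abs_nonneg _) zero_le_one
    _ = 1 := by ring
  have hferrint : Integrable ferr μ := hInt ferr δ hferrm hferrb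
  have hsumint : Integrable (fun u => ∑ i ∈ Finset.range N, δ * (f0 u * Ind i u)) μ :=
    integrable_finset_sum _ fun i _ => hfiint i
  have hcf0int : Integrable (fun u => c * f0 u) μ := hf0int.const_mul c
  -- pointwise identity
  have hident : ∀ u, f0 u * φ (p (u.1, u.2.1)) =
      c * f0 u + (∑ i ∈ Finset.range N, δ * (f0 u * Ind i u)) + ferr u := by
    intro u
    have hms : ∑ i ∈ Finset.range N, δ * (f0 u * Ind i u) =
        f0 u * ∑ i ∈ Finset.range N, δ * Ind i u := by
      rw [Finset.mul_sum]
      exact Finset.sum_congr rfl fun i _ => by ring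
    rw [hms, hferr]
    ring
  -- split the integral
  have hsplit : ∫ u, f0 u * φ (p (u.1, u.2.1)) ∂μ =
      c * (∫ u, f0 u ∂μ) + (∑ i ∈ Finset.range N, δ * ∫ u, f0 u * Ind i u ∂μ) +
        ∫ u, ferr u ∂μ := by
    rw [show (fun u => f0 u * φ (p (u.1, u.2.1))) =
        fun u => c * f0 u + (∑ i ∈ Finset.range N, δ * (f0 u * Ind i u)) + ferr u from
      funext hident]
    have hsum1 : Integrable (fun u => c * f0 u +
        ∑ i ∈ Finset.range N, δ * (f0 u * Ind i u)) μ := hcf0int.add hsumint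
    rw [integral_add hsum1 hferrint, integral_add hcf0int hsumint,
      integral_const_mul, integral_finset_sum _ fun i _ => hfiint i]
    congr 2
    exact Finset.sum_congr rfl fun i _ => integral_const_mul δ _
  -- bounds on each part
  have hb0 : |∫ u, f0 u ∂μ| ≤ B := hA1
  have hbi : ∀ i, |∫ u, f0 u * Ind i u ∂μ| ≤ B := fun i => hD (c + ((i:ℝ)+1) * δ)
  have hberr : |∫ u, ferr u ∂μ| ≤ δ := by
    have := norm_integral_le_of_norm_le_const (μ := μ) (f := ferr) (C := δ)
      (Filter.Eventually.of_forall (by simpa [Real.norm_eq_abs] using hferrb))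
    simpa [Real.norm_eq_abs, measure_univ] using this
  have hcb : |c| ≤ 2 := hφbdd 1 ⟨zero_le_one, le_refl 1⟩
  -- assemble
  have hmain : |∫ u, f0 u * φ (p (u.1, u.2.1)) ∂μ| ≤ 7 * B := by
    rw [hsplit]
    have h1 : |c * ∫ u, f0 u ∂μ| ≤ 2 * B := by
      rw [abs_mul]
      exact mul_le_mul hcb hb0 (abs_nonneg _) (by norm_num)
    have h2 : |∑ i ∈ Finset.range N, δ * ∫ u, f0 u * Ind i u ∂μ| ≤ 4 * B := by
      calc |∑ i ∈ Finset.range N, δ * ∫ u, f0 u * Ind i u ∂μ| ≤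
          ∑ i ∈ Finset.range N, |δ * ∫ u, f0 u * Ind i u ∂μ| := Finset.abs_sum_le_sum_abs _ _
      _ ≤ ∑ i ∈ Finset.range N, δ * B := by
          apply Finset.sum_le_sum
          intro i _
          rw [abs_mul, abs_of_pos hδpos]
          exact mul_le_mul_of_nonneg_left (hbi i) hδpos.le
      _ = (N:ℝ) * (δ * B) := by rw [Finset.sum_const, Finset.card_range, nsmul_eq_mul]
      _ = 4 * B := by rw [← mul_assoc, hNδ]
    have h3 : |∫ u, ferr u ∂μ| ≤ B := le_trans hberr (le_trans hδε hεB)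
    calc |c * (∫ u, f0 u ∂μ) + (∑ i ∈ Finset.range N, δ * ∫ u, f0 u * Ind i u ∂μ) +
        ∫ u, ferr u ∂μ| ≤
        |c * (∫ u, f0 u ∂μ) + ∑ i ∈ Finset.range N, δ * ∫ u, f0 u * Ind i u ∂μ| +
          |∫ u, ferr u ∂μ| := abs_add_le _ _
    _ ≤ (|c * (∫ u, f0 u ∂μ)| + |∑ i ∈ Finset.range N, δ * ∫ u, f0 u * Ind i u ∂μ|) +
          |∫ u, ferr u ∂μ| := by gcongr; exact abs_add_le _ _
    _ ≤ (2 * B + 4 * B) + B := by gcongr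
    _ = 7 * B := by ring
  -- conclude
  have hgoal : condER π D g (fun u => (lab u.2.2 - p (u.1, u.2.1)) *
      (ℓ (k (p (u.1, u.2.1))) true - ℓ (k (p (u.1, u.2.1))) false)) =
      ∫ u, f0 u * φ (p (u.1, u.2.1)) ∂μ := rfl
  rw [hgoal]
  calc |∫ u, f0 u * φ (p (u.1, u.2.1)) ∂μ| ≤ 7 * B := hmain
  _ ≤ 10 * B := by linarith
  _ = 10 * ε * Real.sqrt (1 / Pg D g) := by rw [hBdef]; ring

end
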